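/- arXiv:2403.03660 — 2 statements merged into one kernel-verified Lean document; each statement's English description precedes it below -/
import Mathlib

section
/- Let G = G₁ *_H G₂ with [G₁ : H] ≥ 3, [G₂ : H] ≥ 2, and suppose there is a ∈ G₁ ∪ G₂ with HaH ≠ Ha⁻¹H. Then G has infinite width with respect to the conjugation-invariant generating set S = (G₁)^G ∪ (G₂)^G; in particular G has infinite C-width. -/
/-- A subset `S` of a group is conjugation invariant if it is closed under
conjugation by all elements of the group. -/
def ConjInvariant {G : Type*} [Group G] (S : Set G) : Prop :=
  ∀ g s : G, s ∈ S → g⁻¹ * s * g ∈ S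

/-- A group has finite width with respect to `S` if there is `n` such that every
element is a product of at most `n` elements of `S ∪ S⁻¹`. -/
def HasFiniteWidth {G : Type*} [Group G] (S : Set G) : Prop :=
  ∃ n : ℕ, ∀ g : G, ∃ l : List G, (∀ x ∈ l, x ∈ S ∪ S⁻¹) ∧ l.prod = g ∧ l.length ≤ n

/-- A group has finite `C`-width if it has finite width with respect to every
conjugation invariant generating set. -/
def FiniteCWidth (G : Type*) [Group G] : Prop :=
  ∀ S : Set G, Subgroup.closure S = ⊤ → ConjInvariant S → HasFiniteWidth S

open scoped Pointwise

/-- `x` and `y` lie in different factors. -/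
def InDiffFactors {G : Type*} [Group G] (G₁ G₂ : Subgroup G) (x y : G) : Prop :=
  ¬(x ∈ G₁ ∧ y ∈ G₁) ∧ ¬(x ∈ G₂ ∧ y ∈ G₂)

/-- A reduced word in an (internal) amalgamated free product of `G₁` and `G₂` over `H`. -/
def ReducedWord' {G : Type*} [Group G] (G₁ G₂ H : Subgroup G) (w : List G) : Prop :=
  (∀ x ∈ w, x ∈ (G₁ : Set G) ∪ (G₂ : Set G)) ∧
  w.Chain' (InDiffFactors G₁ G₂) ∧
  (1 < w.length → ∀ x ∈ w, x ∉ H) ∧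
  (w.length = 1 → (1 : G) ∉ w)

/-- `G` is the (internal) amalgamated free product `G₁ *_H G₂`: `H = G₁ ⊓ G₂`,
the factors generate, and nonempty reduced words have nontrivial product. -/
def IsAmalgam {G : Type*} [Group G] (G₁ G₂ H : Subgroup G) : Prop :=
  H = G₁ ⊓ G₂ ∧ Subgroup.closure ((G₁ : Set G) ∪ (G₂ : Set G)) = ⊤ ∧
  ∀ w : List G, ReducedWord' G₁ G₂ H w → w ≠ [] → w.prod ≠ 1

/-- The double coset `H a H`. -/
def DCoset {G : Type*} [Group G] (H : Subgroup G) (a : G) : Set G :=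
  (H : Set G) * {a} * (H : Set G)

/-- There is an `a`-segment of length `2k-1` starting at position `j` of the word `w`:
a subword `a x₁ ⋯ x_{2k-1} a` with no `x_i = a`. -/
def IsSegAt {G : Type*} [Group G] (a : G) (w : List G) (k j : ℕ) : Prop :=
  1 ≤ k ∧ w[j]? = some a ∧ w[j + 2 * k]? = some a ∧
    ∀ i, 0 < i → i < 2 * k → w[j + i]? ≠ some a

/-- `pk a w k` = number of `a`-segments of length `2k-1` in `w`. -/
noncomputable def pk {G : Type*} [Group G] (a : G) (w : List G) (k : ℕ) : ℕ :=
  Set.ncard {j : ℕ | IsSegAt a w k j}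

/-- `mk' a w k` = number of `a⁻¹`-segments of length `2k-1` in `w`. -/
noncomputable def mk' {G : Type*} [Group G] (a : G) (w : List G) (k : ℕ) : ℕ :=
  pk a⁻¹ w k

noncomputable def dk {G : Type*} [Group G] (a : G) (w : List G) (k : ℕ) : ℤ :=
  (pk a w k : ℤ) - (mk' a w k : ℤ)

/-- `rk` is the parity of `dk`. -/
noncomputable def rk {G : Type*} [Group G] (a : G) (w : List G) (k : ℕ) : ℕ :=
  (dk a w k).natAbs % 2

/-- The segment-counting function `f(w) = Σ_k r_k(w)` (all segments have length
at most the length of `w`, so the sum below is the full sum). -/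
noncomputable def segf {G : Type*} [Group G] (a : G) (w : List G) : ℕ :=
  ∑ k ∈ Finset.Icc 1 w.length, rk a w k

/-- Data describing the passage from a reduced word `x` to a special form: each
syllable of the form `u * a^θ * v` with `u v ∈ H` (marked `rep i = true`) is replaced
by `a^θ`, with `u`, `v` absorbed into the neighbouring syllables. -/
structure SpecialData {G : Type*} [Group G] (H : Subgroup G) (a : G) (x : List G) where
  rep : ℕ → Bool
  u : ℕ → G
  v : ℕ → G
  θ : ℕ → ℤ
  hu : ∀ i, u i ∈ H
  hv : ∀ i, v i ∈ H
  hθ : ∀ i, θ i = 1 ∨ θ i = -1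
  hrep : ∀ (i : ℕ) (hi : i < x.length), rep i = true → x.get ⟨i, hi⟩ = u i * a ^ θ i * v i
  hnotrep : ∀ i, rep i = false → u i = 1 ∧ v i = 1
  hforced : ∀ (i : ℕ) (hi : i < x.length),
    (∃ u' ∈ H, ∃ v' ∈ H, ∃ θ' : ℤ, (θ' = 1 ∨ θ' = -1) ∧ x.get ⟨i, hi⟩ = u' * a ^ θ' * v') →
    rep i = true

/-- The special form produced from the reduced word `x` by the data `d`. -/
def SpecialData.word {G : Type*} [Group G] {H : Subgroup G} {a : G} {x : List G}
    (d : SpecialData H a x) : List G :=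
  (if x.length ≠ 0 ∧ d.rep 0 = true then [d.u 0] else []) ++
  (List.ofFn fun i : Fin x.length =>
    if d.rep (i : ℕ) = true then a ^ d.θ (i : ℕ)
    else (if (i : ℕ) = 0 then 1 else d.v ((i : ℕ) - 1)) * x.get i *
      (if (i : ℕ) + 1 < x.length then d.u ((i : ℕ) + 1) else 1)) ++
  (if x.length ≠ 0 ∧ d.rep (x.length - 1) = true then [d.v (x.length - 1)] else [])

/-- `w` is a special form of `g`. -/
def IsSpecialForm {G : Type*} [Group G] (G₁ G₂ H : Subgroup G) (a g : G) (w : List G) : Prop :=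
  ∃ (x : List G) (d : SpecialData H a x),
    ReducedWord' G₁ G₂ H x ∧ x.prod = g ∧ w = d.word

namespace AWpure

/-- a `ε`-segment (for fixed gap 6) at position `j`. -/
def seg (ε : ℤ) (s : List ℤ) (j : ℕ) : Prop :=
  s[j]? = some ε ∧ s[j + 6]? = some ε ∧ ∀ i, 0 < i → i < 6 → s[j + i]? ≠ some ε

lemma seg.lt {ε : ℤ} {s : List ℤ} {j : ℕ} (h : seg ε s j) : j + 6 < s.length :=
  (List.getElem?_eq_some_iff.mp h.2.1).1

noncomputable def cnt (ε : ℤ) (s : List ℤ) : ℕ := Set.ncard {j | seg ε s j}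

lemma segSet_finite (ε : ℤ) (s : List ℤ) : {j | seg ε s j}.Finite :=
  Set.Finite.subset (Set.finite_Iio s.length) (fun j hj => lt_of_le_of_lt (by omega) hj.lt)

noncomputable def dd (s : List ℤ) : ℤ := (cnt 1 s : ℤ) - (cnt (-1) s : ℤ)

lemma cnt_eq_zero {ε : ℤ} {s : List ℤ} (h : ∀ j, ¬ seg ε s j) : cnt ε s = 0 := by
  unfold cnt
  have : {j | seg ε s j} = ∅ := by ext j; simpa using h j
  simp [this]

lemma cnt_short {ε : ℤ} {s : List ℤ} (h : s.length ≤ 6) : cnt ε s = 0 :=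
  cnt_eq_zero (fun j hj => by have := hj.lt; omega)

lemma dd_short {s : List ℤ} (h : s.length ≤ 6) : dd s = 0 := by
  simp [dd, cnt_short h]

lemma seg_append_low {ε : ℤ} {α δ : List ℤ} {j : ℕ} (h : j + 6 < α.length) :
    seg ε (α ++ δ) j ↔ seg ε α j := by
  unfold seg
  rw [List.getElem?_append_left (by omega : j < α.length),
    List.getElem?_append_left h]
  constructor
  · rintro ⟨h1, h2, h3⟩
    exact ⟨h1, h2, fun i hi1 hi2 => by
      have := h3 i hi1 hi2
      rwa [List.getElem?_append_left (by omega : j + i < α.length)] at this⟩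
  · rintro ⟨h1, h2, h3⟩
    exact ⟨h1, h2, fun i hi1 hi2 => by
      rw [List.getElem?_append_left (by omega : j + i < α.length)]
      exact h3 i hi1 hi2⟩

lemma seg_append_high {ε : ℤ} {α δ : List ℤ} {j : ℕ} (h : α.length ≤ j) :
    seg ε (α ++ δ) j ↔ seg ε δ (j - α.length) := by
  unfold seg
  have e0 : (α ++ δ)[j]? = δ[j - α.length]? := List.getElem?_append_right h
  have e6 : (α ++ δ)[j + 6]? = δ[j - α.length + 6]? := by
    rw [List.getElem?_append_right (by omega : α.length ≤ j + 6)]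
    congr 1; omega
  rw [e0, e6]
  constructor
  · rintro ⟨h1, h2, h3⟩
    exact ⟨h1, h2, fun i hi1 hi2 => by
      have := h3 i hi1 hi2
      rw [List.getElem?_append_right (by omega : α.length ≤ j + i)] at this
      have e : j + i - α.length = j - α.length + i := by omega
      rwa [e] at this⟩
  · rintro ⟨h1, h2, h3⟩
    exact ⟨h1, h2, fun i hi1 hi2 => by
      rw [List.getElem?_append_right (by omega : α.length ≤ j + i),
        (by omega : j + i - α.length = j - α.length + i)]
      exact h3 i hi1 hi2⟩

lemma cnt_append (ε : ℤ) (α δ : List ℤ) :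
    ∃ e ≤ 1, cnt ε (α ++ δ) = cnt ε α + cnt ε δ + e := by
  classical
  set S := {j | seg ε (α ++ δ) j} with hS
  have hfin : S.Finite := segSet_finite _ _
  set S₁ := {j | seg ε (α ++ δ) j ∧ j + 6 < α.length}
  set S₂ := {j | seg ε (α ++ δ) j ∧ α.length ≤ j}
  set S₃ := {j | seg ε (α ++ δ) j ∧ j < α.length ∧ α.length ≤ j + 6}
  have hsplit : S = S₁ ∪ S₃ ∪ S₂ := by
    ext j
    simp only [S, S₁, S₂, S₃, Set.mem_setOf_eq, Set.mem_union]
    constructor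
    · intro h
      by_cases h1 : j + 6 < α.length
      · exact Or.inl (Or.inl ⟨h, h1⟩)
      by_cases h2 : α.length ≤ j
      · exact Or.inr ⟨h, h2⟩
      · exact Or.inl (Or.inr ⟨h, by omega, by omega⟩)
    · rintro ((⟨h, _⟩ | ⟨h, _⟩) | ⟨h, _⟩) <;> exact h
  have hS₁ : S₁ = {j | seg ε α j} := by
    ext j
    simp only [S₁, Set.mem_setOf_eq]
    constructor
    · rintro ⟨h, h1⟩; exact (seg_append_low h1).mp h
    · intro h
      have h1 : j + 6 < α.length := h.lt
      exact ⟨(seg_append_low h1).mpr h, h1⟩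
  have hS₂ : S₂ = (fun j => j + α.length) '' {j | seg ε δ j} := by
    ext j
    simp only [S₂, Set.mem_setOf_eq, Set.mem_image]
    constructor
    · rintro ⟨h, h2⟩
      exact ⟨j - α.length, (seg_append_high h2).mp h, by omega⟩
    · rintro ⟨j', h', rfl⟩
      have h2 : α.length ≤ j' + α.length := by omega
      refine ⟨(seg_append_high h2).mpr ?_, h2⟩
      have e : j' + α.length - α.length = j' := by omega
      rwa [e]
  have hS₃ : S₃.Subsingleton := by
    intro j hj j' hj'
    by_contra hne
    have hj21 : j < α.length := hj.2.1
    have hj22 : α.length ≤ j + 6 := hj.2.2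
    have hj21' : j' < α.length := hj'.2.1
    have hj22' : α.length ≤ j' + 6 := hj'.2.2
    rcases Nat.lt_or_ge j j' with hlt | hge
    · exact hj.1.2.2 (j' - j) (by omega) (by omega)
        (by rw [(by omega : j + (j' - j) = j')]; exact hj'.1.1)
    · have hlt : j' < j := by omega
      exact hj'.1.2.2 (j - j') (by omega) (by omega)
        (by rw [(by omega : j' + (j - j') = j)]; exact hj.1.1)
  refine ⟨S₃.ncard, ?_, ?_⟩
  · rcases Set.Subsingleton.eq_empty_or_singleton hS₃ with h | ⟨x, h⟩ <;> simp [h]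
  have hd₁₃ : Disjoint S₁ S₃ := by
    rw [Set.disjoint_left]; rintro j ⟨_, h1⟩ ⟨_, h2, h3⟩; omega
  have hd₁₃₂ : Disjoint (S₁ ∪ S₃) S₂ := by
    rw [Set.disjoint_left]
    rintro j (⟨h, h1⟩ | ⟨h, h2, h3⟩) ⟨_, h4⟩
    · have := h.lt; omega
    · omega
  have f1 : S₁.Finite := hfin.subset (by rw [hsplit]; intro x hx; exact Or.inl (Or.inl hx))
  have f3 : S₃.Finite := hfin.subset (by rw [hsplit]; intro x hx; exact Or.inl (Or.inr hx))
  have f2 : S₂.Finite := hfin.subset (by rw [hsplit]; intro x hx; exact Or.inr hx)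
  have := Set.ncard_union_eq hd₁₃₂ (f1.union f3) f2
  rw [Set.ncard_union_eq hd₁₃ f1 f3] at this
  have himg : S₂.ncard = {j | seg ε δ j}.ncard := by
    rw [hS₂, Set.ncard_image_of_injective _ (fun x y hxy => by omega)]
  show S.ncard = _
  rw [hsplit, this, hS₁, himg]
  unfold cnt
  ring

lemma dd_append (α δ : List ℤ) : ∃ e : ℤ, |e| ≤ 2 ∧ dd (α ++ δ) = dd α + dd δ + e := by
  obtain ⟨e1, he1, h1⟩ := cnt_append 1 α δ
  obtain ⟨e2, he2, h2⟩ := cnt_append (-1) α δ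
  refine ⟨(e1 : ℤ) - e2, ?_, ?_⟩
  · rw [abs_le]
    constructor <;> [skip; skip] <;>
      · have : (e1 : ℤ) ≤ 1 := by exact_mod_cast he1
        have : (e2 : ℤ) ≤ 1 := by exact_mod_cast he2
        omega
  · unfold dd; rw [h1, h2]; push_cast; ring

def negrev (s : List ℤ) : List ℤ := (s.map (fun x => -x)).reverse

@[simp] lemma negrev_length (s : List ℤ) : (negrev s).length = s.length := by
  simp [negrev]

lemma negrev_getElem? {s : List ℤ} {j : ℕ} (h : j < s.length) :
    (negrev s)[j]? = (s[s.length - 1 - j]?).map (fun x => -x) := by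
  unfold negrev
  rw [List.getElem?_reverse (by simpa using h), List.getElem?_map]
  congr 2
  simp

lemma negrev_append (α δ : List ℤ) : negrev (α ++ δ) = negrev δ ++ negrev α := by
  simp [negrev]

lemma seg_negrev {ε : ℤ} {s : List ℤ} {j : ℕ} (h : j + 6 < s.length) :
    seg ε (negrev s) j ↔ seg (-ε) s (s.length - 7 - j) := by
  have key : ∀ i ≤ 6, ((negrev s)[j + i]? = some ε ↔ s[s.length - 7 - j + (6 - i)]? = some (-ε)) := by
    intro i hi
    rw [negrev_getElem? (by omega)]
    have e : s.length - 1 - (j + i) = s.length - 7 - j + (6 - i) := by omega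
    rw [e]
    constructor
    · intro hmap
      rcases Option.map_eq_some_iff.mp hmap with ⟨x, hx, hx2⟩
      rw [hx]; congr; omega
    · intro hx; rw [hx]; simp
  constructor
  · rintro ⟨h1, h2, h3⟩
    refine ⟨?_, ?_, ?_⟩
    · have := (key 6 le_rfl).mp h2; simpa using this
    · have := (key 0 (by omega)).mp h1; simpa using this
    · intro i hi1 hi2
      intro hcon
      have : (negrev s)[j + (6 - i)]? = some ε := by
        rw [(key (6 - i) (by omega))]
        have e : 6 - (6 - i) = i := by omega
        rw [e]; exact hcon
      exact h3 (6 - i) (by omega) (by omega) this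
  · rintro ⟨h1, h2, h3⟩
    refine ⟨?_, ?_, ?_⟩
    · have h' : (negrev s)[j + 0]? = some ε := (key 0 (by omega)).mpr (by simpa using h2)
      simpa using h'
    · exact (key 6 le_rfl).mpr (by simpa using h1)
    · intro i hi1 hi2 hcon
      rw [key i (by omega)] at hcon
      exact h3 (6 - i) (by omega) (by omega) hcon

lemma cnt_negrev (ε : ℤ) (s : List ℤ) : cnt ε (negrev s) = cnt (-ε) s := by
  unfold cnt
  have himg : {j | seg ε (negrev s) j} = (fun j => s.length - 7 - j) '' {j | seg (-ε) s j} := by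
    ext j
    simp only [Set.mem_setOf_eq, Set.mem_image]
    constructor
    · intro h
      have hl : j + 6 < s.length := by have := h.lt; simpa using this
      refine ⟨s.length - 7 - j, (seg_negrev hl).mp h, by omega⟩
    · rintro ⟨j', h', rfl⟩
      have hl' : j' + 6 < s.length := h'.lt
      rw [seg_negrev (by omega)]
      have e : s.length - 7 - (s.length - 7 - j') = j' := by omega
      rw [e]; exact h'
  rw [himg, Set.ncard_image_of_injOn ?_]
  intro x hx y hy hxy
  have hx6 : x + 6 < s.length := hx.lt
  have hy6 : y + 6 < s.length := hy.lt
  simp only at hxy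
  omega

lemma dd_negrev (s : List ℤ) : dd (negrev s) = - dd s := by
  unfold dd
  rw [cnt_negrev, cnt_negrev, neg_neg]
  ring

end AWpure

namespace AW

variable {G : Type*} [Group G] {G₁ G₂ H : Subgroup G}

/-- strongly reduced word: all letters outside `H`. -/
def Red (G₁ G₂ H : Subgroup G) (w : List G) : Prop :=
  (∀ x ∈ w, x ∈ (G₁ : Set G) ∪ (G₂ : Set G)) ∧
  w.Chain' (InDiffFactors G₁ G₂) ∧ ∀ x ∈ w, x ∉ H

lemma Red.toReducedWord' {w : List G} (h : Red G₁ G₂ H w) : ReducedWord' G₁ G₂ H w := by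
  refine ⟨h.1, h.2.1, fun _ x hx => h.2.2 x hx, fun _ h1 => ?_⟩
  exact h.2.2 1 h1 H.one_mem

lemma red_nil : Red G₁ G₂ H ([] : List G) := ⟨by simp, List.isChain_nil, by simp⟩

lemma mem_dcoset_iff {x b : G} : x ∈ DCoset H b ↔ ∃ h₁ ∈ H, ∃ h₂ ∈ H, x = h₁ * b * h₂ := by
  unfold DCoset
  constructor
  · intro hx
    rcases Set.mem_mul.mp hx with ⟨y, hy, h₂, hh₂, rfl⟩
    rcases Set.mem_mul.mp hy with ⟨h₁, hh₁, b', hb', rfl⟩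
    rcases Set.mem_singleton_iff.mp hb'
    exact ⟨h₁, hh₁, h₂, hh₂, rfl⟩
  · rintro ⟨h₁, hh₁, h₂, hh₂, rfl⟩
    exact Set.mul_mem_mul (Set.mul_mem_mul hh₁ rfl) hh₂

lemma mem_dcoset_self (b : G) : b ∈ DCoset H b :=
  mem_dcoset_iff.mpr ⟨1, H.one_mem, 1, H.one_mem, by group⟩

lemma dcoset_eq_of_mem {x b : G} (hx : x ∈ DCoset H b) : DCoset H x = DCoset H b := by
  rcases mem_dcoset_iff.mp hx with ⟨h₁, hh₁, h₂, hh₂, rfl⟩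
  ext y
  rw [mem_dcoset_iff, mem_dcoset_iff]
  constructor
  · rintro ⟨k₁, hk₁, k₂, hk₂, rfl⟩
    exact ⟨k₁ * h₁, H.mul_mem hk₁ hh₁, h₂ * k₂, H.mul_mem hh₂ hk₂, by group⟩
  · rintro ⟨k₁, hk₁, k₂, hk₂, rfl⟩
    exact ⟨k₁ * h₁⁻¹, H.mul_mem hk₁ (H.inv_mem hh₁), h₂⁻¹ * k₂,
      H.mul_mem (H.inv_mem hh₂) hk₂, by group⟩

lemma mem_dcoset_iff_eq {x b : G} : x ∈ DCoset H b ↔ DCoset H x = DCoset H b :=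
  ⟨dcoset_eq_of_mem, fun h => h ▸ mem_dcoset_self x⟩

lemma dcoset_of_mem_H {b : G} (hb : b ∈ H) : DCoset H b = (H : Set G) := by
  ext x
  rw [mem_dcoset_iff]
  constructor
  · rintro ⟨h₁, hh₁, h₂, hh₂, rfl⟩; exact H.mul_mem (H.mul_mem hh₁ hb) hh₂
  · intro hx; exact ⟨x * b⁻¹, H.mul_mem hx (H.inv_mem hb), 1, H.one_mem, by group⟩

lemma mem_dcoset_inv {x b : G} (hx : x ∈ DCoset H b) : x⁻¹ ∈ DCoset H b⁻¹ := by
  rcases mem_dcoset_iff.mp hx with ⟨h₁, hh₁, h₂, hh₂, rfl⟩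
  exact mem_dcoset_iff.mpr ⟨h₂⁻¹, H.inv_mem hh₂, h₁⁻¹, H.inv_mem hh₁, by group⟩

open scoped Classical in
/-- the label of a letter: ±1 according to the double coset of `a^{±1}`, else 0. -/
noncomputable def lab1 (H : Subgroup G) (a x : G) : ℤ :=
  if x ∈ DCoset H a then 1 else if x ∈ DCoset H a⁻¹ then -1 else 0

noncomputable def lab (H : Subgroup G) (a : G) (w : List G) : List ℤ := w.map (lab1 H a)

@[simp] lemma lab_nil (a : G) : lab H a ([] : List G) = [] := rfl
@[simp] lemma lab_append (a : G) (u v : List G) :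
    lab H a (u ++ v) = lab H a u ++ lab H a v := by simp [lab]
@[simp] lemma lab_cons (a x : G) (w : List G) :
    lab H a (x :: w) = lab1 H a x :: lab H a w := rfl
@[simp] lemma lab_length (a : G) (w : List G) : (lab H a w).length = w.length := by simp [lab]

variable {a : G}

lemma not_mem_H_of_hd (hd : DCoset H a ≠ DCoset H a⁻¹) : a ∉ H := fun h =>
  hd (by rw [dcoset_of_mem_H h, dcoset_of_mem_H (H.inv_mem h)])

lemma dcoset_disj (hd : DCoset H a ≠ DCoset H a⁻¹) {x : G}
    (h1 : x ∈ DCoset H a) (h2 : x ∈ DCoset H a⁻¹) : False :=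
  hd ((dcoset_eq_of_mem h1).symm.trans (dcoset_eq_of_mem h2))

lemma lab1_a : lab1 H a a = 1 := by
  unfold lab1
  rw [if_pos (mem_dcoset_self a)]

lemma lab1_ainv (hd : DCoset H a ≠ DCoset H a⁻¹) : lab1 H a a⁻¹ = -1 := by
  unfold lab1
  rw [if_neg (fun h => dcoset_disj hd (mem_dcoset_self a)
    (by simpa using mem_dcoset_inv h)), if_pos (mem_dcoset_self a⁻¹)]

lemma lab1_dcongr {x y : G} (h : DCoset H x = DCoset H y) : lab1 H a x = lab1 H a y := by
  unfold lab1
  rw [show (x ∈ DCoset H a) = (y ∈ DCoset H a) by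
      rw [mem_dcoset_iff_eq, mem_dcoset_iff_eq, h],
    show (x ∈ DCoset H a⁻¹) = (y ∈ DCoset H a⁻¹) by
      rw [mem_dcoset_iff_eq, mem_dcoset_iff_eq, h]]

lemma lab1_sandwich {x : G} {h₁ h₂ : G} (hh₁ : h₁ ∈ H) (hh₂ : h₂ ∈ H) :
    lab1 H a (h₁ * x * h₂) = lab1 H a x :=
  lab1_dcongr (dcoset_eq_of_mem (mem_dcoset_iff.mpr ⟨h₁, hh₁, h₂, hh₂, rfl⟩))

lemma lab1_inv (hd : DCoset H a ≠ DCoset H a⁻¹) (x : G) : lab1 H a x⁻¹ = - lab1 H a x := by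
  unfold lab1
  by_cases h1 : x ∈ DCoset H a
  · have h1' : x⁻¹ ∉ DCoset H a := fun hcon =>
      dcoset_disj hd h1 (by simpa using mem_dcoset_inv hcon)
    rw [if_neg h1', if_pos (mem_dcoset_inv h1), if_pos h1]
  · by_cases h2 : x ∈ DCoset H a⁻¹
    · have hx : x⁻¹ ∈ DCoset H a := by simpa using mem_dcoset_inv h2
      rw [if_pos hx, if_neg h1, if_pos h2]
      norm_num
    · have h1' : x⁻¹ ∉ DCoset H a := fun hcon => h2 (by simpa using mem_dcoset_inv hcon)
      have h2' : x⁻¹ ∉ DCoset H a⁻¹ := fun hcon => h1 (by simpa using mem_dcoset_inv hcon)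
      rw [if_neg h1', if_neg h2', if_neg h1, if_neg h2]
      norm_num


section Words
variable {a : G}

lemma sub1 (hH : H = G₁ ⊓ G₂) : H ≤ G₁ := by rw [hH]; exact inf_le_left
lemma sub2 (hH : H = G₁ ⊓ G₂) : H ≤ G₂ := by rw [hH]; exact inf_le_right
lemma mem_H_of_both (hH : H = G₁ ⊓ G₂) {x : G} (h1 : x ∈ G₁) (h2 : x ∈ G₂) : x ∈ H := by
  rw [hH]; exact ⟨h1, h2⟩

/-- same factor-membership pattern. -/
def sameF (G₁ G₂ : Subgroup G) (x x' : G) : Prop :=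
  (x ∈ G₁ ↔ x' ∈ G₁) ∧ (x ∈ G₂ ↔ x' ∈ G₂)

lemma sameF_refl (x : G) : sameF G₁ G₂ x x := ⟨Iff.rfl, Iff.rfl⟩

lemma sameF_inv (x : G) : sameF G₁ G₂ x x⁻¹ :=
  ⟨(inv_mem_iff (x := x)).symm, (inv_mem_iff (x := x)).symm⟩

lemma sameF_sandwich (hH : H = G₁ ⊓ G₂) {h₁ h₂ : G} (hh₁ : h₁ ∈ H) (hh₂ : h₂ ∈ H) (x : G) :
    sameF G₁ G₂ x (h₁ * x * h₂) := by
  constructor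
  · constructor
    · intro hx; exact G₁.mul_mem (G₁.mul_mem (sub1 hH hh₁) hx) (sub1 hH hh₂)
    · intro hx
      have : h₁⁻¹ * (h₁ * x * h₂) * h₂⁻¹ = x := by group
      rw [← this]
      exact G₁.mul_mem (G₁.mul_mem (G₁.inv_mem (sub1 hH hh₁)) hx) (G₁.inv_mem (sub1 hH hh₂))
  · constructor
    · intro hx; exact G₂.mul_mem (G₂.mul_mem (sub2 hH hh₁) hx) (sub2 hH hh₂)
    · intro hx
      have : h₁⁻¹ * (h₁ * x * h₂) * h₂⁻¹ = x := by group
      rw [← this]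
      exact G₂.mul_mem (G₂.mul_mem (G₂.inv_mem (sub2 hH hh₁)) hx) (G₂.inv_mem (sub2 hH hh₂))

lemma indiff_symm {x y : G} (h : InDiffFactors G₁ G₂ x y) : InDiffFactors G₁ G₂ y x :=
  ⟨fun ⟨h1, h2⟩ => h.1 ⟨h2, h1⟩, fun ⟨h1, h2⟩ => h.2 ⟨h2, h1⟩⟩

lemma indiff_congr {x y x' y' : G} (h : InDiffFactors G₁ G₂ x y)
    (hx : sameF G₁ G₂ x x') (hy : sameF G₁ G₂ y y') : InDiffFactors G₁ G₂ x' y' := by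
  constructor
  · intro ⟨h1, h2⟩; exact h.1 ⟨hx.1.mpr h1, hy.1.mpr h2⟩
  · intro ⟨h1, h2⟩; exact h.2 ⟨hx.2.mpr h1, hy.2.mpr h2⟩

lemma red_append_iff {p q : List G} : Red G₁ G₂ H (p ++ q) ↔
    Red G₁ G₂ H p ∧ Red G₁ G₂ H q ∧
    (∀ xp ∈ p.getLast?, ∀ xq ∈ q.head?, InDiffFactors G₁ G₂ xp xq) := by
  unfold Red
  unfold List.Chain'
  rw [List.isChain_append]
  constructor
  · rintro ⟨hm, ⟨c1, c2, c3⟩, hh⟩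
    exact ⟨⟨fun x hx => hm x (by simp [hx]), c1, fun x hx => hh x (by simp [hx])⟩,
      ⟨fun x hx => hm x (by simp [hx]), c2, fun x hx => hh x (by simp [hx])⟩, c3⟩
  · rintro ⟨⟨m1, c1, h1⟩, ⟨m2, c2, h2⟩, c3⟩
    refine ⟨fun x hx => ?_, ⟨c1, c2, c3⟩, fun x hx => ?_⟩
    · rcases List.mem_append.mp hx with h | h
      exacts [m1 x h, m2 x h]
    · rcases List.mem_append.mp hx with h | h
      exacts [h1 x h, h2 x h]

lemma red_singleton {x : G} (hx : x ∈ (G₁ : Set G) ∪ (G₂ : Set G)) (hxH : x ∉ H) :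
    Red G₁ G₂ H [x] := ⟨by simpa using hx, List.isChain_singleton _, by simpa using hxH⟩

/-- reverse-inverse of a word. -/
def rinv (w : List G) : List G := (w.map (fun x => x⁻¹)).reverse

@[simp] lemma rinv_nil : rinv ([] : List G) = [] := rfl

lemma rinv_prod (w : List G) : (rinv w).prod = w.prod⁻¹ :=
  (List.prod_inv_reverse w).symm

lemma rinv_append (u v : List G) : rinv (u ++ v) = rinv v ++ rinv u := by simp [rinv]

lemma rinv_red {w : List G} (hw : Red G₁ G₂ H w) : Red G₁ G₂ H (rinv w) := by
  obtain ⟨m, c, h⟩ := hw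
  refine ⟨?_, ?_, ?_⟩
  · intro x hx
    simp only [rinv, List.mem_reverse, List.mem_map] at hx
    obtain ⟨y, hy, rfl⟩ := hx
    rcases m y hy with h1 | h1
    · exact Or.inl (G₁.inv_mem h1)
    · exact Or.inr (G₂.inv_mem h1)
  · unfold rinv
    unfold List.Chain'
    rw [List.isChain_reverse]
    refine List.isChain_map_of_isChain _ ?_ c
    intro x y hxy
    exact indiff_symm (indiff_congr hxy (sameF_inv x) (sameF_inv y))
  · intro x hx
    simp only [rinv, List.mem_reverse, List.mem_map] at hx
    obtain ⟨y, hy, rfl⟩ := hx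
    intro hcon
    exact h y hy (by simpa using H.inv_mem hcon)

/-- labels of reverse-inverse. -/
lemma lab_rinv (hd : DCoset H a ≠ DCoset H a⁻¹) (w : List G) :
    lab H a (rinv w) = AWpure.negrev (lab H a w) := by
  unfold rinv AWpure.negrev lab
  rw [List.map_reverse, List.map_map, List.map_map]
  congr 1
  apply List.map_congr_left
  intro x _
  exact lab1_inv hd x

lemma sameF_mul_right (hH : H = G₁ ⊓ G₂) {p : G} (hp : p ∈ H) (x : G) :
    sameF G₁ G₂ x (x * p) := by
  have := sameF_sandwich hH H.one_mem hp x
  simpa using this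

lemma sameF_mul_left (hH : H = G₁ ⊓ G₂) {p : G} (hp : p ∈ H) (x : G) :
    sameF G₁ G₂ x (p * x) := by
  have := sameF_sandwich hH hp H.one_mem x
  simpa [mul_assoc] using this

/-- core: a nonempty strongly reduced word has product outside `H`. -/
lemma prod_notin_H (ham : IsAmalgam G₁ G₂ H) {w : List G} (hw : Red G₁ G₂ H w)
    (hne : w ≠ []) : w.prod ∉ H := by
  intro hmem
  rcases List.eq_nil_or_concat w with rfl | ⟨u, x, hux⟩
  · exact hne rfl
  rw [List.concat_eq_append] at hux
  subst hux
  rcases List.eq_nil_or_concat u with rfl | ⟨u', y, huy⟩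
  · exact hw.2.2 x (by simp) (by simpa using hmem)
  rw [List.concat_eq_append] at huy
  subst huy
  set p := ((u' ++ [y]) ++ [x]).prod with hp
  obtain ⟨hru, hrx, hseam⟩ := red_append_iff.mp hw
  have hxm : x ∈ (G₁ : Set G) ∪ (G₂ : Set G) := hrx.1 x (by simp)
  have hxH : x ∉ H := hrx.2.2 x (by simp)
  have hxp : x * p⁻¹ ∈ (G₁ : Set G) ∪ (G₂ : Set G) := by
    rcases hxm with h1 | h1
    · exact Or.inl (G₁.mul_mem h1 (G₁.inv_mem (sub1 ham.1 hmem)))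
    · exact Or.inr (G₂.mul_mem h1 (G₂.inv_mem (sub2 ham.1 hmem)))
  have hxpH : x * p⁻¹ ∉ H := by
    intro hcon
    have : x ∈ H := by
      have := H.mul_mem hcon hmem
      simpa [mul_assoc] using this
    exact hxH this
  have hsame : sameF G₁ G₂ x (x * p⁻¹) := sameF_mul_right ham.1 (H.inv_mem hmem) x
  have hred' : Red G₁ G₂ H ((u' ++ [y]) ++ [x * p⁻¹]) := by
    rw [red_append_iff]
    refine ⟨hru, red_singleton hxp hxpH, ?_⟩
    intro xp hxp' xq hxq'
    simp only [List.getLast?_concat, Option.mem_def, Option.some.injEq] at hxp'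
    simp only [List.head?_cons, Option.mem_def, Option.some.injEq] at hxq'
    subst hxp'
    subst hxq'
    have hyx : InDiffFactors G₁ G₂ y x := by
      have := hseam y (by simp [List.getLast?_concat]) x (by simp)
      exact this
    exact indiff_congr hyx (sameF_refl y) hsame
  have hprod : ((u' ++ [y]) ++ [x * p⁻¹]).prod = 1 := by
    rw [List.prod_append, List.prod_singleton]
    have : (u' ++ [y]).prod * x = p := by
      rw [hp]; simp [List.prod_append, mul_assoc]
    rw [← mul_assoc, this, mul_inv_cancel]
  exact ham.2.2 _ (Red.toReducedWord' hred') (by simp) hprod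


lemma rinv_head {w : List G} {z : G} : (rinv (w ++ [z])).head? = some z⁻¹ := by
  rw [rinv_append]
  simp [rinv]

lemma rinv_singleton (z : G) : rinv [z] = [z⁻¹] := by simp [rinv]

/-- Uniqueness of strongly reduced decompositions, up to double cosets. -/
lemma unique_dcoset (ham : IsAmalgam G₁ G₂ H) :
    ∀ (v u : List G), Red G₁ G₂ H u → Red G₁ G₂ H v → ∀ h h' : G, h ∈ H → h' ∈ H →
    u.prod * h = v.prod * h' →
    List.Forall₂ (fun x z => DCoset H x = DCoset H z) u v := by
  intro v
  induction v using List.reverseRecOn with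
  | nil =>
    intro u hu _ h h' hh hh' heq
    rcases List.eq_nil_or_concat u with rfl | ⟨u₀, x, hux⟩
    · exact List.Forall₂.nil
    · exfalso
      subst hux
      rw [List.concat_eq_append] at hu heq
      refine prod_notin_H ham hu (by simp) ?_
      have : (u₀ ++ [x]).prod = h' * h⁻¹ := by
        simp only [List.prod_nil, one_mul] at heq
        rw [← heq]; group
      rw [this]
      exact H.mul_mem hh' (H.inv_mem hh)
  | append_singleton v₀ z ih =>
    intro u hu hv h h' hh hh' heq
    obtain ⟨hrv₀, hrz, hseamv⟩ := red_append_iff.mp hv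
    have hzu : z ∈ (G₁ : Set G) ∪ G₂ := hrz.1 z (by simp)
    have hzH : z ∉ H := hrz.2.2 z (by simp)
    rcases List.eq_nil_or_concat u with rfl | ⟨u₀, x, hux⟩
    · exfalso
      refine prod_notin_H ham hv (by simp) ?_
      have : (v₀ ++ [z]).prod = h * h'⁻¹ := by
        simp only [List.prod_nil, one_mul] at heq
        rw [heq]; group
      rw [this]
      exact H.mul_mem hh (H.inv_mem hh')
    subst hux
    rw [List.concat_eq_append] at hu heq ⊢
    obtain ⟨hru₀, hrx, hseamu⟩ := red_append_iff.mp hu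
    have hxu : x ∈ (G₁ : Set G) ∪ G₂ := hrx.1 x (by simp)
    have hxH : x ∉ H := hrx.2.2 x (by simp)
    have hup : (u₀ ++ [x]).prod = u₀.prod * x := by simp
    have hvp : (v₀ ++ [z]).prod = v₀.prod * z := by simp
    rw [hup, hvp] at heq
    by_cases hc : (x ∈ G₁ ∧ z ∈ G₁) ∨ (x ∈ G₂ ∧ z ∈ G₂)
    · -- x and z lie in a common factor
      set y := x * (h * h'⁻¹) * z⁻¹ with hy
      have hprod_y : u₀.prod * y = v₀.prod := by
        have e1 : u₀.prod * y = (u₀.prod * x * h) * (h'⁻¹ * z⁻¹) := by rw [hy]; group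
        rw [e1, heq]; group
      have hyH' : h * h'⁻¹ ∈ H := H.mul_mem hh (H.inv_mem hh')
      by_cases hyH : y ∈ H
      · -- cancellation: recurse
        have hf₀ := ih u₀ hru₀ hrv₀ y 1 hyH H.one_mem (by rw [mul_one]; exact hprod_y)
        refine List.rel_append hf₀ (List.Forall₂.cons ?_ List.Forall₂.nil)
        -- DCoset H x = DCoset H z
        have hx_eq : x = y * z * (h * h'⁻¹)⁻¹ := by rw [hy]; group
        refine dcoset_eq_of_mem (mem_dcoset_iff.mpr ⟨y, hyH, (h * h'⁻¹)⁻¹, H.inv_mem hyH', ?_⟩)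
        rw [hx_eq]
      · -- no cancellation: contradiction word u₀ ++ [y] ++ rinv v₀
        exfalso
        -- memberships of y and sameF facts
        have hyG : (y ∈ G₁ ∧ x ∈ G₁ ∧ z ∈ G₁) ∨ (y ∈ G₂ ∧ x ∈ G₂ ∧ z ∈ G₂) := by
          rcases hc with ⟨hx1, hz1⟩ | ⟨hx2, hz2⟩
          · exact Or.inl ⟨G₁.mul_mem (G₁.mul_mem hx1 (sub1 ham.1 hyH')) (G₁.inv_mem hz1), hx1, hz1⟩
          · exact Or.inr ⟨G₂.mul_mem (G₂.mul_mem hx2 (sub2 ham.1 hyH')) (G₂.inv_mem hz2), hx2, hz2⟩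
        have hyu : y ∈ (G₁ : Set G) ∪ G₂ := by
          rcases hyG with ⟨h1, _⟩ | ⟨h1, _⟩
          exacts [Or.inl h1, Or.inr h1]
        have hsxy : sameF G₁ G₂ x y := by
          rcases hyG with ⟨hy1, hx1, hz1⟩ | ⟨hy2, hx2, hz2⟩
          · exact ⟨iff_of_true hx1 hy1, iff_of_false
              (fun hcon => hxH (mem_H_of_both ham.1 hx1 hcon))
              (fun hcon => hyH (mem_H_of_both ham.1 hy1 hcon))⟩
          · exact ⟨iff_of_false
              (fun hcon => hxH (mem_H_of_both ham.1 hcon hx2))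
              (fun hcon => hyH (mem_H_of_both ham.1 hcon hy2)), iff_of_true hx2 hy2⟩
        have hszy : sameF G₁ G₂ z y := by
          rcases hyG with ⟨hy1, hx1, hz1⟩ | ⟨hy2, hx2, hz2⟩
          · exact ⟨iff_of_true hz1 hy1, iff_of_false
              (fun hcon => hzH (mem_H_of_both ham.1 hz1 hcon))
              (fun hcon => hyH (mem_H_of_both ham.1 hy1 hcon))⟩
          · exact ⟨iff_of_false
              (fun hcon => hzH (mem_H_of_both ham.1 hcon hz2))
              (fun hcon => hyH (mem_H_of_both ham.1 hcon hy2)), iff_of_true hz2 hy2⟩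
        have hred : Red G₁ G₂ H ((u₀ ++ [y]) ++ rinv v₀) := by
          rw [red_append_iff]
          refine ⟨?_, rinv_red hrv₀, ?_⟩
          · rw [red_append_iff]
            refine ⟨hru₀, red_singleton hyu hyH, ?_⟩
            intro xp hxp xq hxq
            simp only [List.head?_cons, Option.mem_def, Option.some.injEq] at hxq
            subst hxq
            exact indiff_congr (hseamu xp hxp x (by simp)) (sameF_refl _) hsxy
          · intro xp hxp xq hxq
            simp only [List.getLast?_concat, Option.mem_def, Option.some.injEq] at hxp
            subst hxp
            rcases List.eq_nil_or_concat v₀ with rfl | ⟨v₁, t, hvt⟩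
            · simp [rinv] at hxq
            subst hvt
            simp only [List.concat_eq_append] at hxq hseamv
            rw [rinv_head] at hxq
            simp only [Option.mem_def, Option.some.injEq] at hxq
            subst hxq
            have := hseamv t (by simp [List.getLast?_concat]) z (by simp)
            exact indiff_congr (indiff_symm this) hszy (sameF_inv t)
        refine prod_notin_H ham hred (by simp) ?_
        have : ((u₀ ++ [y]) ++ rinv v₀).prod = u₀.prod * y * v₀.prod⁻¹ := by
          rw [List.prod_append, List.prod_append, rinv_prod]
          simp [mul_assoc]
        rw [this, hprod_y, mul_inv_cancel]
        exact H.one_mem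
    · -- different factors: contradiction word
      exfalso
      have hidf : InDiffFactors G₁ G₂ x z := by
        constructor
        · intro hcon; exact hc (Or.inl hcon)
        · intro hcon; exact hc (Or.inr hcon)
      set x' := x * (h * h'⁻¹) with hx'
      have hx'u : x' ∈ (G₁ : Set G) ∪ G₂ := by
        rcases hxu with h1 | h1
        · exact Or.inl (G₁.mul_mem h1 (sub1 ham.1 (H.mul_mem hh (H.inv_mem hh'))))
        · exact Or.inr (G₂.mul_mem h1 (sub2 ham.1 (H.mul_mem hh (H.inv_mem hh'))))
      have hx'H : x' ∉ H := by
        intro hcon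
        exact hxH (by
          have : x = x' * (h * h'⁻¹)⁻¹ := by rw [hx']; group
          rw [this]
          exact H.mul_mem hcon (H.inv_mem (H.mul_mem hh (H.inv_mem hh'))))
      have hsxx' : sameF G₁ G₂ x x' := sameF_mul_right ham.1 (H.mul_mem hh (H.inv_mem hh')) x
      have hred : Red G₁ G₂ H ((u₀ ++ [x']) ++ rinv (v₀ ++ [z])) := by
        rw [red_append_iff]
        refine ⟨?_, rinv_red hv, ?_⟩
        · rw [red_append_iff]
          refine ⟨hru₀, red_singleton hx'u hx'H, ?_⟩
          intro xp hxp xq hxq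
          simp only [List.head?_cons, Option.mem_def, Option.some.injEq] at hxq
          subst hxq
          exact indiff_congr (hseamu xp hxp x (by simp)) (sameF_refl _) hsxx'
        · intro xp hxp xq hxq
          simp only [List.getLast?_concat, Option.mem_def, Option.some.injEq] at hxp
          subst hxp
          rw [rinv_head] at hxq
          simp only [Option.mem_def, Option.some.injEq] at hxq
          subst hxq
          exact indiff_congr hidf hsxx' (sameF_inv z)
      refine prod_notin_H ham hred (by simp) ?_
      have : ((u₀ ++ [x']) ++ rinv (v₀ ++ [z])).prod = u₀.prod * x' * (v₀.prod * z)⁻¹ := by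
        rw [List.prod_append, List.prod_append, rinv_prod, hvp]
        simp [mul_assoc]
      rw [this]
      have : u₀.prod * x' * (v₀.prod * z)⁻¹ = 1 := by
        have e1 : u₀.prod * x' = (u₀.prod * x * h) * h'⁻¹ * z⁻¹ * z := by rw [hx']; group
        rw [e1, heq]; group
      rw [this]
      exact H.one_mem

lemma lab_eq_of_forall₂ {u v : List G}
    (hf : List.Forall₂ (fun x z => DCoset H x = DCoset H z) u v) :
    lab H a u = lab H a v := by
  induction hf with
  | nil => rfl
  | cons hxz _ ih => simp only [lab_cons, ih, lab1_dcongr hxz]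

lemma unique_lab (ham : IsAmalgam G₁ G₂ H) {u v : List G}
    (hu : Red G₁ G₂ H u) (hv : Red G₁ G₂ H v) {h h' : G} (hh : h ∈ H) (hh' : h' ∈ H)
    (heq : u.prod * h = v.prod * h') : lab H a u = lab H a v :=
  lab_eq_of_forall₂ (unique_dcoset ham v u hu hv h h' hh hh' heq)


lemma red_cons_iff {z : G} {v₂ : List G} : Red G₁ G₂ H (z :: v₂) ↔
    (z ∈ (G₁ : Set G) ∪ G₂ ∧ z ∉ H ∧ (∀ xq ∈ v₂.head?, InDiffFactors G₁ G₂ z xq) ∧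
      Red G₁ G₂ H v₂) := by
  have : z :: v₂ = [z] ++ v₂ := rfl
  rw [this, red_append_iff]
  constructor
  · rintro ⟨hz, hv, hs⟩
    exact ⟨hz.1 z (by simp), hz.2.2 z (by simp), fun xq hxq => hs z (by simp) xq hxq, hv⟩
  · rintro ⟨h1, h2, h3, h4⟩
    refine ⟨red_singleton h1 h2, h4, ?_⟩
    intro xp hxp xq hxq
    simp only [List.getLast?_singleton, Option.mem_def, Option.some.injEq] at hxp
    subst hxp
    exact h3 xq hxq

lemma red_head_twist (hH : H = G₁ ⊓ G₂) {z : G} {v₂ : List G} {h : G}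
    (hv : Red G₁ G₂ H (z :: v₂)) (hh : h ∈ H) : Red G₁ G₂ H ((h * z) :: v₂) := by
  rw [red_cons_iff] at hv ⊢
  obtain ⟨h1, h2, h3, h4⟩ := hv
  have hs : sameF G₁ G₂ z (h * z) := sameF_mul_left hH hh z
  refine ⟨?_, ?_, ?_, h4⟩
  · rcases h1 with hm | hm
    · exact Or.inl (hs.1.mp hm)
    · exact Or.inr (hs.2.mp hm)
  · intro hcon
    exact h2 (by
      have : z = h⁻¹ * (h * z) := by group
      rw [this]; exact H.mul_mem (H.inv_mem hh) hcon)
  · intro xq hxq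
    exact indiff_congr (h3 xq hxq) hs (sameF_refl _)

lemma lab1_mul_left {a h z : G} (hh : h ∈ H) : lab1 H a (h * z) = lab1 H a z := by
  have : h * z = h * z * 1 := by group
  rw [this]
  exact lab1_sandwich hh H.one_mem

/-- The cancellation lemma for products of reduced words. -/
lemma mul_red (ham : IsAmalgam G₁ G₂ H) {a : G} (hd : DCoset H a ≠ DCoset H a⁻¹) :
    ∀ (v u : List G) (h : G), Red G₁ G₂ H u → Red G₁ G₂ H v → h ∈ H →
    ∃ (w : List G) (h' : G) (A B C D mid : List ℤ),
      Red G₁ G₂ H w ∧ h' ∈ H ∧ w.prod * h' = u.prod * h * v.prod ∧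
      lab H a u = A ++ B ∧ lab H a v = C ++ D ∧ lab H a w = A ++ mid ++ D ∧
      mid.length ≤ 1 ∧
      (C = AWpure.negrev B ∨
        ∃ (B₀ C₀ : List ℤ) (b c : ℤ), B = b :: B₀ ∧ C = C₀ ++ [c] ∧
          C₀ = AWpure.negrev B₀) := by
  intro v
  induction v with
  | nil =>
    intro u h hu _ hh
    exact ⟨u, h, lab H a u, [], [], [], [], hu, hh, by simp, by simp, by simp, by simp,
      by simp, Or.inl (by simp [AWpure.negrev])⟩
  | cons z v₂ ih =>
    intro u h hu hv hh
    obtain ⟨hzu, hzH, hseamv, hrv₂⟩ := red_cons_iff.mp hv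
    rcases List.eq_nil_or_concat u with rfl | ⟨u₀, x, hux⟩
    · -- empty u : absorb h into the head of v
      refine ⟨(h * z) :: v₂, 1, [], [], [], lab H a (z :: v₂), [],
        red_head_twist ham.1 hv hh, H.one_mem, ?_, by simp, by simp, ?_, by simp,
        Or.inl (by simp [AWpure.negrev])⟩
      · simp [mul_assoc]
      · simp [lab1_mul_left hh]
    subst hux
    rw [List.concat_eq_append] at hu ⊢
    obtain ⟨hru₀, hrx, hseamu⟩ := red_append_iff.mp hu
    have hxu : x ∈ (G₁ : Set G) ∪ G₂ := hrx.1 x (by simp)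
    have hxH : x ∉ H := hrx.2.2 x (by simp)
    by_cases hc : (x ∈ G₁ ∧ z ∈ G₁) ∨ (x ∈ G₂ ∧ z ∈ G₂)
    · -- common factor: merge or cancel
      set y := x * h * z with hy
      have hyG : (y ∈ G₁ ∧ x ∈ G₁ ∧ z ∈ G₁) ∨ (y ∈ G₂ ∧ x ∈ G₂ ∧ z ∈ G₂) := by
        rcases hc with ⟨hx1, hz1⟩ | ⟨hx2, hz2⟩
        · exact Or.inl ⟨G₁.mul_mem (G₁.mul_mem hx1 (sub1 ham.1 hh)) hz1, hx1, hz1⟩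
        · exact Or.inr ⟨G₂.mul_mem (G₂.mul_mem hx2 (sub2 ham.1 hh)) hz2, hx2, hz2⟩
      by_cases hyH : y ∈ H
      · -- cancellation: recurse
        have hlabz : lab1 H a z = - lab1 H a x := by
          have hzval : z = h⁻¹ * (x⁻¹ * y) := by rw [hy]; group
          rw [hzval, lab1_mul_left (H.inv_mem hh)]
          have e : x⁻¹ * y = 1 * x⁻¹ * y := by group
          rw [e, lab1_sandwich H.one_mem hyH]
          exact lab1_inv hd x
        obtain ⟨w, h', A, B, C, D, mid, hrw, hh', hprod, hlabu, hlabv, hlabw, hmid, hdisj⟩ :=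
          ih u₀ y hru₀ hrv₂ hyH
        refine ⟨w, h', A, B ++ [lab1 H a x], (lab1 H a z) :: C, D, mid, hrw, hh', ?_,
          ?_, ?_, hlabw, hmid, ?_⟩
        · rw [hprod]
          simp only [List.prod_append, List.prod_cons, List.prod_singleton]
          rw [hy]
          simp only [List.prod_nil, one_mul, mul_one]
          group
        · rw [lab_append, hlabu]
          simp
        · rw [lab_cons, hlabv]
          simp
        · rcases hdisj with hC | ⟨B₀, C₀, b, c, hB, hC, hBC⟩
          · left
            rw [hC, hlabz, AWpure.negrev_append]
            simp [AWpure.negrev]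
          · right
            refine ⟨B₀ ++ [lab1 H a x], (lab1 H a z) :: C₀, b, c, by rw [hB]; simp, by
              rw [hC]; simp, ?_⟩
            rw [AWpure.negrev_append, hBC, hlabz]
            simp [AWpure.negrev]
      · -- merge into a single letter
        have hyu : y ∈ (G₁ : Set G) ∪ G₂ := by
          rcases hyG with ⟨h1, _⟩ | ⟨h1, _⟩
          exacts [Or.inl h1, Or.inr h1]
        have hsxy : sameF G₁ G₂ x y := by
          rcases hyG with ⟨hy1, hx1, hz1⟩ | ⟨hy2, hx2, hz2⟩
          · exact ⟨iff_of_true hx1 hy1, iff_of_false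
              (fun hcon => hxH (mem_H_of_both ham.1 hx1 hcon))
              (fun hcon => hyH (mem_H_of_both ham.1 hy1 hcon))⟩
          · exact ⟨iff_of_false
              (fun hcon => hxH (mem_H_of_both ham.1 hcon hx2))
              (fun hcon => hyH (mem_H_of_both ham.1 hcon hy2)), iff_of_true hx2 hy2⟩
        have hszy : sameF G₁ G₂ z y := by
          rcases hyG with ⟨hy1, hx1, hz1⟩ | ⟨hy2, hx2, hz2⟩
          · exact ⟨iff_of_true hz1 hy1, iff_of_false
              (fun hcon => hzH (mem_H_of_both ham.1 hz1 hcon))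
              (fun hcon => hyH (mem_H_of_both ham.1 hy1 hcon))⟩
          · exact ⟨iff_of_false
              (fun hcon => hzH (mem_H_of_both ham.1 hcon hz2))
              (fun hcon => hyH (mem_H_of_both ham.1 hcon hy2)), iff_of_true hz2 hy2⟩
        have hrw : Red G₁ G₂ H ((u₀ ++ [y]) ++ v₂) := by
          rw [red_append_iff]
          refine ⟨?_, hrv₂, ?_⟩
          · rw [red_append_iff]
            refine ⟨hru₀, red_singleton hyu hyH, ?_⟩
            intro xp hxp xq hxq
            simp only [List.head?_cons, Option.mem_def, Option.some.injEq] at hxq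
            subst hxq
            exact indiff_congr (hseamu xp hxp x (by simp)) (sameF_refl _) hsxy
          · intro xp hxp xq hxq
            simp only [List.getLast?_concat, Option.mem_def, Option.some.injEq] at hxp
            subst hxp
            exact indiff_congr (hseamv xq hxq) hszy (sameF_refl _)
        refine ⟨(u₀ ++ [y]) ++ v₂, 1, lab H a u₀, [lab1 H a x], [lab1 H a z], lab H a v₂,
          [lab1 H a y], hrw, H.one_mem, ?_, by simp, by simp, by simp, by simp,
          Or.inr ⟨[], [], lab1 H a x, lab1 H a z, rfl, rfl, rfl⟩⟩
        simp only [List.prod_append, List.prod_cons, List.prod_singleton,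
          List.prod_nil, mul_one, one_mul]
        rw [hy]; group
    · -- different factors: no interaction
      have hidf : InDiffFactors G₁ G₂ x z := ⟨fun hcon => hc (Or.inl hcon),
        fun hcon => hc (Or.inr hcon)⟩
      have hrw : Red G₁ G₂ H ((u₀ ++ [x]) ++ ((h * z) :: v₂)) := by
        rw [red_append_iff]
        refine ⟨hu, red_head_twist ham.1 hv hh, ?_⟩
        intro xp hxp xq hxq
        simp only [List.getLast?_concat, Option.mem_def, Option.some.injEq] at hxp
        simp only [List.head?_cons, Option.mem_def, Option.some.injEq] at hxq
        subst hxp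
        subst hxq
        exact indiff_congr hidf (sameF_refl _) (sameF_mul_left ham.1 hh z)
      refine ⟨(u₀ ++ [x]) ++ ((h * z) :: v₂), 1, lab H a (u₀ ++ [x]), [], [],
        lab H a (z :: v₂), [], hrw, H.one_mem, ?_, by simp, by simp, ?_, by simp,
        Or.inl (by simp [AWpure.negrev])⟩
      · simp [mul_assoc]
      · simp [lab1_mul_left hh]



open AWpure in
/-- product bound form of the cancellation lemma. -/
lemma mul_red_d (ham : IsAmalgam G₁ G₂ H) {a : G} (hd : DCoset H a ≠ DCoset H a⁻¹)
    {u v : List G} {h : G} (hu : Red G₁ G₂ H u) (hv : Red G₁ G₂ H v) (hh : h ∈ H) :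
    ∃ (w : List G) (h' : G), Red G₁ G₂ H w ∧ h' ∈ H ∧ w.prod * h' = u.prod * h * v.prod ∧
      |dd (lab H a w) - dd (lab H a u) - dd (lab H a v)| ≤ 12 := by
  obtain ⟨w, h', A, B, C, D, mid, hrw, hh', hprod, hlabu, hlabv, hlabw, hmid, hdisj⟩ :=
    mul_red ham hd v u h hu hv hh
  refine ⟨w, h', hrw, hh', hprod, ?_⟩
  obtain ⟨e1, he1, hdu⟩ := dd_append A B
  obtain ⟨e2, he2, hdv⟩ := dd_append C D
  obtain ⟨e3, he3, hdw⟩ := dd_append A (mid ++ D)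
  obtain ⟨e4, he4, hdw2⟩ := dd_append mid D
  have hddmid : dd mid = 0 := dd_short (by omega)
  have hBC : |dd B + dd C| ≤ 4 := by
    rcases hdisj with hC | ⟨B₀, C₀, b, c, hB, hC, hBC⟩
    · rw [hC, dd_negrev]
      simp
    · obtain ⟨e5, he5, hdB⟩ := dd_append [b] B₀
      obtain ⟨e6, he6, hdC⟩ := dd_append C₀ [c]
      have h5 : dd [b] = 0 := dd_short (by simp)
      have h6 : dd ([c] : List ℤ) = 0 := dd_short (by simp)
      have h7 : dd C₀ = - dd B₀ := by rw [hBC, dd_negrev]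
      have hBf : dd B = dd B₀ + e5 := by
        rw [hB]
        have : b :: B₀ = [b] ++ B₀ := rfl
        rw [this, hdB, h5]; ring
      have hCf : dd C = - dd B₀ + e6 := by rw [hC, hdC, h6, h7]; ring
      rw [hBf, hCf]
      rw [abs_le] at he5 he6 ⊢
      omega
  rw [hlabu, hlabv, hlabw, List.append_assoc, hdw, hdw2, hdu, hdv, hddmid]
  rw [abs_le] at he1 he2 he3 he4 hBC ⊢
  omega

open AWpure in
/-- reduced form of a conjugate of a factor element is label-antisymmetric. -/
lemma conj_red (ham : IsAmalgam G₁ G₂ H) {a : G} (hd : DCoset H a ≠ DCoset H a⁻¹) :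
    ∀ (w : List G) (c : G), Red G₁ G₂ H w → (c ∈ G₁ ∨ c ∈ G₂) →
    ∃ (ww : List G) (h' : G), Red G₁ G₂ H ww ∧ h' ∈ H ∧
      ww.prod * h' = w.prod⁻¹ * c * w.prod ∧
      ∃ B mid : List ℤ, lab H a ww = negrev B ++ mid ++ B ∧ mid.length ≤ 1 := by
  intro w
  induction w with
  | nil =>
    intro c _ hc
    by_cases hcH : c ∈ H
    · exact ⟨[], c, red_nil, hcH, by simp, [], [], by simp [negrev], by simp⟩
    · refine ⟨[c], 1, red_singleton ?_ hcH, H.one_mem, by simp, [], [lab1 H a c],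
        by simp [negrev], by simp⟩
      rcases hc with h1 | h1
      exacts [Or.inl h1, Or.inr h1]
  | cons x w₂ ih =>
    intro c hw hc
    obtain ⟨hxu, hxH, hseam, hrw₂⟩ := red_cons_iff.mp hw
    by_cases hstop : c ∉ H ∧ InDiffFactors G₁ G₂ x c
    · -- stop: the word is already anti-symmetric
      refine ⟨rinv (x :: w₂) ++ [c] ++ (x :: w₂), 1, ?_, H.one_mem, ?_, lab H a (x :: w₂),
        [lab1 H a c], ?_, by simp⟩
      · rw [red_append_iff]
        refine ⟨?_, hw, ?_⟩
        · rw [red_append_iff]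
          refine ⟨rinv_red hw, red_singleton ?_ hstop.1, ?_⟩
          · rcases hc with h1 | h1
            exacts [Or.inl h1, Or.inr h1]
          · intro xp hxp xq hxq
            simp only [List.head?_cons, Option.mem_def, Option.some.injEq] at hxq
            subst hxq
            have : rinv (x :: w₂) = rinv w₂ ++ [x⁻¹] := by
              have : x :: w₂ = [x] ++ w₂ := rfl
              rw [this, rinv_append, rinv_singleton]
            rw [this, List.getLast?_concat] at hxp
            simp only [Option.mem_def, Option.some.injEq] at hxp
            subst hxp
            exact indiff_congr hstop.2 (sameF_inv x) (sameF_refl c)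
        · intro xp hxp xq hxq
          simp only [List.getLast?_concat, Option.mem_def, Option.some.injEq] at hxp
          simp only [List.head?_cons, Option.mem_def, Option.some.injEq] at hxq
          subst hxp
          subst hxq
          exact indiff_symm hstop.2
      · simp only [List.prod_append, List.prod_cons, List.prod_singleton, List.prod_nil,
          rinv_prod, one_mul, mul_one]
      · rw [lab_append, lab_append, lab_rinv hd]
        rfl
    · -- recurse with conjugated center
      have hc' : x⁻¹ * c * x ∈ G₁ ∨ x⁻¹ * c * x ∈ G₂ := by
        by_cases hcH : c ∈ H
        · rcases hxu with h1 | h1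
          · exact Or.inl (G₁.mul_mem (G₁.mul_mem (G₁.inv_mem h1) (sub1 ham.1 hcH)) h1)
          · exact Or.inr (G₂.mul_mem (G₂.mul_mem (G₂.inv_mem h1) (sub2 ham.1 hcH)) h1)
        · have hcom : ¬ InDiffFactors G₁ G₂ x c := fun hidf => hstop ⟨hcH, hidf⟩
          by_cases h1 : x ∈ G₁ ∧ c ∈ G₁
          · exact Or.inl (G₁.mul_mem (G₁.mul_mem (G₁.inv_mem h1.1) h1.2) h1.1)
          · have h2 : x ∈ G₂ ∧ c ∈ G₂ := by
              by_contra h2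
              exact hcom ⟨h1, h2⟩
            exact Or.inr (G₂.mul_mem (G₂.mul_mem (G₂.inv_mem h2.1) h2.2) h2.1)
      obtain ⟨ww, h', hrww, hh', hprod, B, mid, hlab, hmid⟩ := ih (x⁻¹ * c * x) hrw₂ hc'
      refine ⟨ww, h', hrww, hh', ?_, B, mid, hlab, hmid⟩
      rw [hprod]
      simp only [List.prod_cons]
      group

open AWpure in
lemma dd_antisym {B mid : List ℤ} (hmid : mid.length ≤ 1) :
    |dd (negrev B ++ mid ++ B)| ≤ 4 := by
  obtain ⟨e1, he1, h1⟩ := dd_append (negrev B) (mid ++ B)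
  obtain ⟨e2, he2, h2⟩ := dd_append mid B
  rw [List.append_assoc, h1, h2, dd_negrev, dd_short (show mid.length ≤ 6 by omega)]
  rw [abs_le] at he1 he2 ⊢
  omega

/-- conjugation of a whole word by an element of `H`. -/
lemma red_conjH {w : List G} (hH : H = G₁ ⊓ G₂) (hw : Red G₁ G₂ H w) {h : G} (hh : h ∈ H) :
    Red G₁ G₂ H (w.map (fun t => h⁻¹ * t * h)) := by
  obtain ⟨m, c, hn⟩ := hw
  refine ⟨?_, ?_, ?_⟩
  · intro x hx
    rcases List.mem_map.mp hx with ⟨t, ht, rfl⟩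
    rcases m t ht with h1 | h1
    · exact Or.inl (G₁.mul_mem (G₁.mul_mem (G₁.inv_mem (sub1 hH hh)) h1) (sub1 hH hh))
    · exact Or.inr (G₂.mul_mem (G₂.mul_mem (G₂.inv_mem (sub2 hH hh)) h1) (sub2 hH hh))
  · refine List.isChain_map_of_isChain _ ?_ c
    intro x y hxy
    exact indiff_congr hxy (sameF_sandwich hH (H.inv_mem hh) hh x)
      (sameF_sandwich hH (H.inv_mem hh) hh y)
  · intro x hx
    rcases List.mem_map.mp hx with ⟨t, ht, rfl⟩
    intro hcon
    refine hn t ht ?_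
    have : t = h * (h⁻¹ * t * h) * h⁻¹ := by group
    rw [this]
    exact H.mul_mem (H.mul_mem hh hcon) (H.inv_mem hh)

lemma lab_conjH {a : G} {w : List G} {h : G} (hh : h ∈ H) :
    lab H a (w.map (fun t => h⁻¹ * t * h)) = lab H a w := by
  unfold lab
  rw [List.map_map]
  apply List.map_congr_left
  intro x _
  exact lab1_sandwich (H.inv_mem hh) hh

lemma prod_conjH (w : List G) (h : G) :
    (w.map (fun t => h⁻¹ * t * h)).prod = h⁻¹ * w.prod * h := by
  induction w with
  | nil => simp
  | cons x w₂ ih =>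
    simp only [List.map_cons, List.prod_cons, ih]
    group

/-- every element has a strongly reduced normal form. -/
lemma exists_red (ham : IsAmalgam G₁ G₂ H) {a : G} (hd : DCoset H a ≠ DCoset H a⁻¹) (g : G) :
    ∃ (w : List G) (h : G), Red G₁ G₂ H w ∧ h ∈ H ∧ w.prod * h = g := by
  have hg : g ∈ Subgroup.closure ((G₁ : Set G) ∪ G₂) := by rw [ham.2.1]; trivial
  induction hg using Subgroup.closure_induction with
  | mem x hx =>
    by_cases hxH : x ∈ H
    · exact ⟨[], x, red_nil, hxH, by simp⟩
    · exact ⟨[x], 1, red_singleton hx hxH, H.one_mem, by simp⟩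
  | one => exact ⟨[], 1, red_nil, H.one_mem, by simp⟩
  | mul g₁ g₂ _ _ ih₁ ih₂ =>
    obtain ⟨w₁, h₁, hr₁, hh₁, hp₁⟩ := ih₁
    obtain ⟨w₂, h₂, hr₂, hh₂, hp₂⟩ := ih₂
    obtain ⟨w, h', A, B, C, D, mid, hrw, hh', hprod, -⟩ :=
      mul_red (a := a) ham hd w₂ w₁ h₁ hr₁ hr₂ hh₁
    refine ⟨w, h' * h₂, hrw, H.mul_mem hh' hh₂, ?_⟩
    rw [← hp₁, ← hp₂, ← mul_assoc, hprod]
    group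
  | inv g₀ _ ih =>
    obtain ⟨w, h, hr, hh, hp⟩ := ih
    refine ⟨(rinv w).map (fun t => h⁻¹ * t * h), h⁻¹, red_conjH ham.1 (rinv_red hr)
      (hh), H.inv_mem hh, ?_⟩
    rw [prod_conjH, rinv_prod, ← hp]
    group



open AWpure in
/-- the growth words: their `dd`-invariant is at least `N`. -/
lemma growth (ham : IsAmalgam G₁ G₂ H) {a c : G} (hd : DCoset H a ≠ DCoset H a⁻¹)
    (hac : (a ∈ G₁ ∧ c ∈ G₂) ∨ (a ∈ G₂ ∧ c ∈ G₁)) (hcH : c ∉ H) (N : ℕ) :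
    ∃ W : List G, Red G₁ G₂ H W ∧ (N : ℤ) ≤ dd (lab H a W) := by
  classical
  have haH : a ∉ H := not_mem_H_of_hd hd
  set f : Fin (6 * N + 1) → G :=
    (fun i => if i.val % 2 = 1 then c else if i.val % 6 = 0 then a else a⁻¹) with hf
  refine ⟨List.ofFn f, ?_, ?_⟩
  · -- reducedness
    have hmem : ∀ i : Fin (6 * N + 1), f i ∈ (G₁ : Set G) ∪ G₂ ∧ f i ∉ H := by
      intro i
      rw [hf]
      rcases hac with ⟨ha1, hc2⟩ | ⟨ha2, hc1⟩
      · by_cases h2 : i.val % 2 = 1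
        · simp only [h2, if_pos]
          exact ⟨Or.inr hc2, hcH⟩
        · simp only [h2, if_neg, if_false]
          by_cases h6 : i.val % 6 = 0 <;> simp only [h6, if_pos, if_neg, if_false, if_true]
          · exact ⟨Or.inl ha1, haH⟩
          · exact ⟨Or.inl (G₁.inv_mem ha1), fun hcon => haH (by simpa using H.inv_mem hcon)⟩
      · by_cases h2 : i.val % 2 = 1
        · simp only [h2, if_pos]
          exact ⟨Or.inl hc1, hcH⟩
        · simp only [h2, if_neg, if_false]
          by_cases h6 : i.val % 6 = 0 <;> simp only [h6, if_pos, if_neg, if_false, if_true]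
          · exact ⟨Or.inr ha2, haH⟩
          · exact ⟨Or.inr (G₂.inv_mem ha2), fun hcon => haH (by simpa using H.inv_mem hcon)⟩
    have hdiff : ∀ (x y : G), (x = a ∨ x = a⁻¹) → y = c → InDiffFactors G₁ G₂ x y := by
      intro x y hx hy
      subst hy
      have hxmem : x ∈ G₁ ↔ a ∈ G₁ := by
        rcases hx with rfl | rfl
        · exact Iff.rfl
        · exact inv_mem_iff
      have hxmem2 : x ∈ G₂ ↔ a ∈ G₂ := by
        rcases hx with rfl | rfl
        · exact Iff.rfl
        · exact inv_mem_iff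
      rcases hac with ⟨ha1, hc2⟩ | ⟨ha2, hc1⟩
      · exact ⟨fun ⟨_, hcon⟩ => hcH (mem_H_of_both ham.1 hcon hc2),
          fun ⟨hcon, _⟩ => haH (mem_H_of_both ham.1 ha1 (hxmem2.mp hcon))⟩
      · exact ⟨fun ⟨hcon, _⟩ => haH (mem_H_of_both ham.1 (hxmem.mp hcon) ha2),
          fun ⟨_, hcon⟩ => hcH (mem_H_of_both ham.1 hc1 hcon)⟩
    refine ⟨?_, ?_, ?_⟩
    · intro x hx
      rcases List.mem_ofFn.mp hx with ⟨i, rfl⟩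
      exact (hmem i).1
    · unfold List.Chain'
      rw [List.isChain_ofFn]
      intro i hi
      by_cases h2 : i % 2 = 1
      · -- f i = c, f (i+1) = a-type
        apply indiff_symm
        apply hdiff
        · rw [hf]
          simp only
          rw [if_neg (by omega)]
          by_cases h6 : (i + 1) % 6 = 0
          · rw [if_pos (by simpa using h6)]; exact Or.inl rfl
          · rw [if_neg (by simpa using h6)]; exact Or.inr rfl
        · rw [hf]; simp only; rw [if_pos (by simpa using h2)]
      · apply hdiff
        · rw [hf]
          simp only
          rw [if_neg (by simpa using h2)]
          by_cases h6 : i % 6 = 0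
          · rw [if_pos (by simpa using h6)]; exact Or.inl rfl
          · rw [if_neg (by simpa using h6)]; exact Or.inr rfl
        · rw [hf]; simp only; rw [if_pos (by omega)]
    · intro x hx
      rcases List.mem_ofFn.mp hx with ⟨i, rfl⟩
      exact (hmem i).2
  · -- the dd lower bound
    set s := lab H a (List.ofFn f) with hs
    have hlen : s.length = 6 * N + 1 := by simp [hs, lab]
    have hlabc : lab1 H a c = 0 := by
      have hc1 : c ∉ DCoset H a := by
        intro hcon
        rcases mem_dcoset_iff.mp hcon with ⟨h₁, hh₁, h₂, hh₂, hceq⟩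
        rcases hac with ⟨ha1, hc2⟩ | ⟨ha2, hc1⟩
        · refine hcH (mem_H_of_both ham.1 ?_ hc2)
          rw [hceq]
          exact G₁.mul_mem (G₁.mul_mem (sub1 ham.1 hh₁) ha1) (sub1 ham.1 hh₂)
        · refine hcH (mem_H_of_both ham.1 hc1 ?_)
          rw [hceq]
          exact G₂.mul_mem (G₂.mul_mem (sub2 ham.1 hh₁) ha2) (sub2 ham.1 hh₂)
      have hc2 : c ∉ DCoset H a⁻¹ := by
        intro hcon
        rcases mem_dcoset_iff.mp hcon with ⟨h₁, hh₁, h₂, hh₂, hceq⟩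
        rcases hac with ⟨ha1, hc2⟩ | ⟨ha2, hc1⟩
        · refine hcH (mem_H_of_both ham.1 ?_ hc2)
          rw [hceq]
          exact G₁.mul_mem (G₁.mul_mem (sub1 ham.1 hh₁) (G₁.inv_mem ha1)) (sub1 ham.1 hh₂)
        · refine hcH (mem_H_of_both ham.1 hc1 ?_)
          rw [hceq]
          exact G₂.mul_mem (G₂.mul_mem (sub2 ham.1 hh₁) (G₂.inv_mem ha2)) (sub2 ham.1 hh₂)
      unfold lab1
      rw [if_neg hc1, if_neg hc2]
    have hget : ∀ j, j < 6 * N + 1 → s[j]? =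
        some (if j % 2 = 1 then 0 else if j % 6 = 0 then 1 else -1) := by
      intro j hj
      rw [hs]
      unfold lab
      rw [List.getElem?_map, List.getElem?_ofFn]
      rw [dif_pos (by simpa using hj)]
      simp only [Option.map_some]
      congr 1
      rw [hf]
      simp only [Fin.val_mk]
      by_cases h2 : j % 2 = 1
      · rw [if_pos h2, if_pos h2, hlabc]
      · rw [if_neg h2, if_neg h2]
        by_cases h6 : j % 6 = 0
        · rw [if_pos h6, if_pos h6, lab1_a]
        · rw [if_neg h6, if_neg h6, lab1_ainv hd]
    have hm : cnt (-1) s = 0 := by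
      apply cnt_eq_zero
      rintro j ⟨h1, h2, h3⟩
      have hj6 : j + 6 < s.length := (List.getElem?_eq_some_iff.mp h2).1
      have hjlt : j < 6 * N + 1 := by omega
      rw [hget j hjlt] at h1
      simp only [Option.some.injEq] at h1
      have hj2 : j % 2 = 0 := by
        by_cases h : j % 2 = 1
        · rw [if_pos h] at h1; norm_num at h1
        · omega
      have hj60 : j % 6 ≠ 0 := by
        intro h
        rw [if_neg (by omega), if_pos h] at h1
        norm_num at h1
      have hj6v : j % 6 = 2 ∨ j % 6 = 4 := by omega
      rcases hj6v with h6 | h6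
      · refine h3 2 (by omega) (by omega) ?_
        rw [hget (j + 2) (by omega)]
        rw [if_neg (by omega), if_neg (by omega)]
      · refine h3 4 (by omega) (by omega) ?_
        rw [hget (j + 4) (by omega)]
        rw [if_neg (by omega), if_neg (by omega)]
    have hp : N ≤ cnt 1 s := by
      have hsub : ((Finset.image (fun t => 6 * t) (Finset.range N) : Finset ℕ) : Set ℕ) ⊆
          {j | AWpure.seg 1 s j} := by
        intro j hj
        simp only [Finset.coe_image, Set.mem_image, Finset.mem_coe, Finset.mem_range] at hj
        obtain ⟨t, ht, rfl⟩ := hj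
        refine ⟨?_, ?_, ?_⟩
        · rw [hget (6 * t) (by omega)]
          rw [if_neg (by omega), if_pos (by omega)]
        · rw [hget (6 * t + 6) (by omega)]
          rw [if_neg (by omega), if_pos (by omega)]
        · intro i hi1 hi2
          rw [hget (6 * t + i) (by omega)]
          by_cases h2 : (6 * t + i) % 2 = 1
          · rw [if_pos h2]
            simp
          · rw [if_neg h2, if_neg (by omega)]
            simp
      calc (N : ℕ) = ((Finset.image (fun t => 6 * t) (Finset.range N)).card) := by
            rw [Finset.card_image_of_injective _ (fun x y hxy => by omega), Finset.card_range]
        _ = ((Finset.image (fun t => 6 * t) (Finset.range N) : Finset ℕ) : Set ℕ).ncard := by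
            rw [Set.ncard_coe_finset]
        _ ≤ cnt 1 s := Set.ncard_le_ncard hsub (segSet_finite 1 s)
    unfold dd
    rw [hm]
    push_cast
    omega



open AWpure in
/-- a conjugate of a factor element has a reduced form with small invariant. -/
lemma conj_elt_d (ham : IsAmalgam G₁ G₂ H) {a : G} (hd : DCoset H a ≠ DCoset H a⁻¹)
    (g k : G) (hk : k ∈ G₁ ∨ k ∈ G₂) :
    ∃ (w : List G) (h' : G), Red G₁ G₂ H w ∧ h' ∈ H ∧ w.prod * h' = g⁻¹ * k * g ∧
      |dd (lab H a w)| ≤ 4 := by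
  obtain ⟨wg, hg, hrg, hhg, hpg⟩ := exists_red ham hd g
  obtain ⟨ww, h', hrww, hh', hprod, B, mid, hlabww, hmid⟩ := conj_red ham hd wg k hrg hk
  refine ⟨ww.map (fun t => hg⁻¹ * t * hg), hg⁻¹ * h' * hg,
    red_conjH ham.1 hrww hhg, ?_, ?_, ?_⟩
  · exact H.mul_mem (H.mul_mem (H.inv_mem hhg) hh') hhg
  · rw [prod_conjH, ← hpg]
    have : ww.prod = wg.prod⁻¹ * k * wg.prod * h'⁻¹ := by
      rw [← hprod]; group
    rw [this]
    group
  · rw [lab_conjH hhg, hlabww]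
    exact dd_antisym hmid

open AWpure in
/-- bound along products of conjugates of factor elements. -/
lemma chain_bound (ham : IsAmalgam G₁ G₂ H) {a : G} (hd : DCoset H a ≠ DCoset H a⁻¹) :
    ∀ l : List G, (∀ s ∈ l, ∃ g k : G, (k ∈ G₁ ∨ k ∈ G₂) ∧ s = g⁻¹ * k * g) →
    ∃ (w : List G) (h' : G), Red G₁ G₂ H w ∧ h' ∈ H ∧ w.prod * h' = l.prod ∧
      |dd (lab H a w)| ≤ 16 * l.length := by
  intro l
  induction l with
  | nil =>
    intro _
    exact ⟨[], 1, red_nil, H.one_mem, by simp, by simp [dd_short]⟩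
  | cons s l ih =>
    intro hmem
    obtain ⟨g, k, hk, hs⟩ := hmem s (by simp)
    obtain ⟨ws, hs', hrs, hhs, hps, hbs⟩ := conj_elt_d ham hd g k hk
    obtain ⟨wl, hl', hrl, hhl, hpl, hbl⟩ := ih (fun t ht => hmem t (by simp [ht]))
    obtain ⟨w, h'', hrw, hh'', hpw, hbw⟩ := mul_red_d ham hd hrs hrl hhs
    refine ⟨w, h'' * hl', hrw, H.mul_mem hh'' hhl, ?_, ?_⟩
    · rw [List.prod_cons, hs, ← hps, ← hpl, ← mul_assoc, hpw]
      group
    · rw [abs_le] at hbs hbl hbw ⊢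
      constructor
      · have := hbw.1
        have := hbs.1
        have := hbl.1
        simp only [List.length_cons]
        push_cast
        omega
      · have := hbw.2
        have := hbs.2
        have := hbl.2
        simp only [List.length_cons]
        push_cast
        omega

end Words
end AW

/-- If `[G₁ : H] ≥ 3`, `[G₂ : H] ≥ 2` and some `a ∈ G₁ ∪ G₂` satisfies `HaH ≠ Ha⁻¹H`,
then the amalgam `G = G₁ *_H G₂` has infinite width with respect to the conjugation
invariant generating set `S = (G₁)^G ∪ (G₂)^G`; in particular `G` has infinite
`C`-width. (Here `Subgroup.relindex H Gᵢ = 0` encodes an infinite index.) -/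
theorem amalgam_infinite_C_width {G : Type*} [Group G] (G₁ G₂ H : Subgroup G)
    (ham : IsAmalgam G₁ G₂ H)
    (h1 : H.relIndex G₁ = 0 ∨ 3 ≤ H.relIndex G₁)
    (h2 : H.relIndex G₂ = 0 ∨ 2 ≤ H.relIndex G₂)
    (a : G) (ha : a ∈ (G₁ : Set G) ∪ (G₂ : Set G))
    (hd : DCoset H a ≠ DCoset H a⁻¹) :
    ConjInvariant {x : G | ∃ g k : G, (k ∈ G₁ ∨ k ∈ G₂) ∧ x = g⁻¹ * k * g} ∧
    Subgroup.closure {x : G | ∃ g k : G, (k ∈ G₁ ∨ k ∈ G₂) ∧ x = g⁻¹ * k * g} = ⊤ ∧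
    ¬ HasFiniteWidth {x : G | ∃ g k : G, (k ∈ G₁ ∨ k ∈ G₂) ∧ x = g⁻¹ * k * g} ∧
    ¬ FiniteCWidth G := by
  set S := {x : G | ∃ g k : G, (k ∈ G₁ ∨ k ∈ G₂) ∧ x = g⁻¹ * k * g} with hS
  have hconj : ConjInvariant S := by
    rintro g s ⟨g', k, hk, rfl⟩
    exact ⟨g' * g, k, hk, by group⟩
  have hgen : Subgroup.closure S = ⊤ := by
    rw [eq_top_iff, ← ham.2.1]
    apply Subgroup.closure_mono
    rintro x (hx | hx)
    · exact ⟨1, x, Or.inl hx, by group⟩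
    · exact ⟨1, x, Or.inr hx, by group⟩
  have hnw : ¬ HasFiniteWidth S := by
    rintro ⟨n, hn⟩
    have hcfac : ∃ c : G, ((a ∈ G₁ ∧ c ∈ G₂) ∨ (a ∈ G₂ ∧ c ∈ G₁)) ∧ c ∉ H := by
      rcases ha with ha1 | ha2
      · have hne : H.subgroupOf G₂ ≠ ⊤ := by
          intro hcon
          have : H.relIndex G₂ = 1 := by
            rw [Subgroup.relIndex, hcon, Subgroup.index_top]
          rcases h2 with h | h <;> omega
        obtain ⟨c', hc'⟩ : ∃ x : G₂, x ∉ H.subgroupOf G₂ := by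
          by_contra hcon
          push_neg at hcon
          exact hne ((Subgroup.eq_top_iff' _).mpr hcon)
        exact ⟨c', Or.inl ⟨ha1, c'.2⟩, by
          simpa [Subgroup.mem_subgroupOf] using hc'⟩
      · have hne : H.subgroupOf G₁ ≠ ⊤ := by
          intro hcon
          have : H.relIndex G₁ = 1 := by
            rw [Subgroup.relIndex, hcon, Subgroup.index_top]
          rcases h1 with h | h <;> omega
        obtain ⟨c', hc'⟩ : ∃ x : G₁, x ∉ H.subgroupOf G₁ := by
          by_contra hcon
          push_neg at hcon
          exact hne ((Subgroup.eq_top_iff' _).mpr hcon)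
        exact ⟨c', Or.inr ⟨ha2, c'.2⟩, by
          simpa [Subgroup.mem_subgroupOf] using hc'⟩
    obtain ⟨c, hac, hcH⟩ := hcfac
    obtain ⟨W, hrW, hdW⟩ := AW.growth ham hd hac hcH (16 * n + 1)
    obtain ⟨l, hlm, hlp, hln⟩ := hn W.prod
    have hmem : ∀ s ∈ l, ∃ g k : G, (k ∈ G₁ ∨ k ∈ G₂) ∧ s = g⁻¹ * k * g := by
      intro s hs
      rcases hlm s hs with h | h
      · exact h
      · obtain ⟨g, k, hk, hkeq⟩ : s⁻¹ ∈ S := Set.mem_inv.mp h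
        refine ⟨g, k⁻¹, ?_, ?_⟩
        · rcases hk with h' | h'
          exacts [Or.inl (G₁.inv_mem h'), Or.inr (G₂.inv_mem h')]
        · have : s = (g⁻¹ * k * g)⁻¹ := by rw [← hkeq]; group
          rw [this]; group
    obtain ⟨w, h', hrw, hh', hpw, hbw⟩ := AW.chain_bound ham hd l hmem
    have hlabeq : AW.lab H a W = AW.lab H a w :=
      AW.unique_lab ham hrW hrw H.one_mem hh' (by rw [mul_one, hpw, hlp])
    rw [hlabeq] at hdW
    rw [abs_le] at hbw
    have hlen : (l.length : ℤ) ≤ n := by exact_mod_cast hln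
    have h16 : AWpure.dd (AW.lab H a w) ≤ 16 * n := le_trans hbw.2 (by linarith)
    have : ((16 * n + 1 : ℕ) : ℤ) ≤ 16 * n := le_trans hdW h16
    push_cast at this
    omega
  exact ⟨hconj, hgen, hnw, fun hF => hnw (hF S hgen hconj)⟩
end

section
/- Let G be a group with a normal subgroup H such that both H and G/H have finite C-width. Then G has finite C-width. -/
section Aux

variable {G : Type*} [Group G] {S : Set G}

/-- inverse of a letter is a letter -/
lemma letter_inv {x : G} (hx : x ∈ S ∪ S⁻¹) : x⁻¹ ∈ S ∪ S⁻¹ := by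
  rcases hx with h | h
  · exact Or.inr (by simpa [Set.mem_inv] using h)
  · exact Or.inl (by simpa [Set.mem_inv] using h)

/-- the inverse word -/
lemma inv_word (v : List G) (hv : ∀ x ∈ v, x ∈ S ∪ S⁻¹) :
    ∃ w : List G, (∀ x ∈ w, x ∈ S ∪ S⁻¹) ∧ w.prod = v.prod⁻¹ ∧ w.length = v.length := by
  refine ⟨(v.map fun x => x⁻¹).reverse, ?_, (List.prod_inv_reverse v).symm, by simp⟩
  intro x hx
  simp only [List.mem_reverse, List.mem_map] at hx
  obtain ⟨y, hy, rfl⟩ := hx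
  exact letter_inv (hv y hy)

lemma conj_word (v : List G) (g : G) :
    (v.map fun x => g⁻¹ * x * g).prod = g⁻¹ * v.prod * g := by
  induction v with
  | nil => simp
  | cons a l ih => simp [ih]; group

lemma word_of_mem_closure (hgen : Subgroup.closure S = ⊤) (x : G) :
    ∃ l : List G, (∀ y ∈ l, y ∈ S ∪ S⁻¹) ∧ l.prod = x := by
  have : x ∈ Submonoid.closure (S ∪ S⁻¹) := by
    rw [← Subgroup.closure_toSubmonoid, hgen]; trivial
  exact Submonoid.exists_list_of_mem_closure this

end Aux

/-- Finite `C`-width is closed under extensions: if `H ◁ G` and both `H` and `G ⧸ H`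
have finite `C`-width, then so does `G`. -/
theorem finiteCWidth_of_extension {G : Type*} [Group G] (H : Subgroup G) [H.Normal]
    (hH : FiniteCWidth H) (hQ : FiniteCWidth (G ⧸ H)) : FiniteCWidth G := by
  intro S hgen hconj
  set π : G →* G ⧸ H := QuotientGroup.mk' H with hπ
  have hsurj : Function.Surjective π := QuotientGroup.mk'_surjective H
  -- the image of S in the quotient
  have hgenQ : Subgroup.closure (π '' S) = ⊤ := by
    rw [← MonoidHom.map_closure, hgen, Subgroup.map_top_of_surjective π hsurj]
  have hconjQ : ConjInvariant (π '' S) := by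
    intro q s hs
    obtain ⟨s₀, hs₀, rfl⟩ := hs
    obtain ⟨g, rfl⟩ := hsurj q
    exact ⟨g⁻¹ * s₀ * g, hconj g s₀ hs₀, by simp⟩
  obtain ⟨n, hn⟩ := hQ (π '' S) hgenQ hconjQ
  -- Lemma A : bounded coset representatives
  have key : ∀ g : G, ∃ v : List G,
      (∀ x ∈ v, x ∈ S ∪ S⁻¹) ∧ v.length ≤ n ∧ v.prod⁻¹ * g ∈ H := by
    intro g
    obtain ⟨L, hL, hLp, hLlen⟩ := hn (π g)
    -- lift L to a list of letters in G
    have lift : ∀ L : List (G ⧸ H), (∀ x ∈ L, x ∈ (π '' S) ∪ (π '' S)⁻¹) →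
        ∃ v : List G, (∀ x ∈ v, x ∈ S ∪ S⁻¹) ∧ π v.prod = L.prod ∧ v.length = L.length := by
      intro L hL
      induction L with
      | nil => exact ⟨[], by simp, by simp, rfl⟩
      | cons a L ih =>
        obtain ⟨v, hv, hvp, hvl⟩ := ih (fun x hx => hL x (List.mem_cons_of_mem a hx))
        have ha := hL a (List.mem_cons_self)
        rcases ha with ⟨s, hs, rfl⟩ | ha
        · exact ⟨s :: v, by
            intro x hx
            rcases List.mem_cons.1 hx with rfl | hx
            exacts [Or.inl hs, hv x hx], by simp [hvp], by simp [hvl]⟩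
        · rw [Set.mem_inv] at ha
          obtain ⟨s, hs, hsa⟩ := ha
          refine ⟨s⁻¹ :: v, ?_, ?_, by simp [hvl]⟩
          · intro x hx
            rcases List.mem_cons.1 hx with rfl | hx
            exacts [Or.inr (by simpa [Set.mem_inv] using hs), hv x hx]
          · simp only [List.prod_cons, map_mul, map_inv, hsa, hvp]
            simp
    obtain ⟨v, hv, hvp, hvl⟩ := lift L hL
    refine ⟨v, hv, hvl ▸ hLlen, ?_⟩
    have : π v.prod = π g := by rw [hvp, hLp]
    simp only [hπ, QuotientGroup.mk'_apply] at this
    exact QuotientGroup.eq.mp this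
  -- the generating set of H
  set T : Set H := {h : H | ∃ l : List G,
      (∀ x ∈ l, x ∈ S ∪ S⁻¹) ∧ l.prod = (h : G) ∧ l.length ≤ 2 * n + 1} with hT
  -- telescoping claim
  have claimC : ∀ l : List G, (∀ x ∈ l, x ∈ S ∪ S⁻¹) →
      ∀ v : List G, (∀ x ∈ v, x ∈ S ∪ S⁻¹) → v.length ≤ n →
      ∀ _ : v.prod⁻¹ * l.prod ∈ H,
      ∃ L : List H, (∀ t ∈ L, t ∈ T) ∧ ((L.prod : H) : G) = v.prod⁻¹ * l.prod := by
    intro l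
    induction l with
    | nil =>
      intro _ v hv hvlen hmem
      simp only [List.prod_nil, mul_one] at hmem ⊢
      obtain ⟨w, hw, hwp, hwl⟩ := inv_word v hv
      refine ⟨[⟨v.prod⁻¹, hmem⟩], ?_, by simp⟩
      intro t ht
      rcases List.mem_singleton.1 ht with rfl
      exact ⟨w, hw, hwp, by omega⟩
    | cons s l' ih =>
      intro hl v hv hvlen hmem
      obtain ⟨v', hv', hv'len, hv'mem⟩ := key l'.prod
      have hl' : ∀ x ∈ l', x ∈ S ∪ S⁻¹ := fun x hx => hl x (List.mem_cons_of_mem s hx)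
      have hsS : s ∈ S ∪ S⁻¹ := hl s (List.mem_cons_self)
      obtain ⟨L', hL', hL'p⟩ := ih hl' v' hv' hv'len hv'mem
      have htH : v.prod⁻¹ * s * v'.prod ∈ H := by
        have : v.prod⁻¹ * s * v'.prod
            = (v.prod⁻¹ * (s :: l').prod) * (v'.prod⁻¹ * l'.prod)⁻¹ := by
          simp only [List.prod_cons]; group
        rw [this]
        exact mul_mem hmem (inv_mem hv'mem)
      have htT : (⟨v.prod⁻¹ * s * v'.prod, htH⟩ : H) ∈ T := by
        obtain ⟨w, hw, hwp, hwl⟩ := inv_word v hv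
        refine ⟨w ++ s :: v', ?_, ?_, ?_⟩
        · intro x hx
          rcases List.mem_append.1 hx with hx | hx
          · exact hw x hx
          · rcases List.mem_cons.1 hx with rfl | hx
            exacts [hsS, hv' x hx]
        · simp [hwp, mul_assoc]
        · simp only [List.length_append, List.length_cons, hwl]; omega
      refine ⟨⟨v.prod⁻¹ * s * v'.prod, htH⟩ :: L', ?_, ?_⟩
      · intro t ht
        rcases List.mem_cons.1 ht with rfl | ht
        exacts [htT, hL' t ht]
      · simp only [List.prod_cons, MulMemClass.coe_mul, hL'p]
        group
  -- T generates H
  have hTgen : Subgroup.closure T = ⊤ := by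
    rw [eq_top_iff]
    rintro h -
    obtain ⟨l, hl, hlp⟩ := word_of_mem_closure hgen (h : G)
    have hmem : (([] : List G).prod)⁻¹ * l.prod ∈ H := by
      simp only [List.prod_nil, inv_one, one_mul, hlp]; exact h.2
    obtain ⟨L, hL, hLp⟩ := claimC l hl [] (by simp) (by simp) hmem
    have : L.prod = h := by
      apply Subtype.ext
      rw [hLp]; simp [hlp]
    rw [← this]
    exact list_prod_mem (fun t ht => Subgroup.subset_closure (hL t ht))
  -- T is conjugation invariant in H
  have hTconj : ConjInvariant T := by
    rintro k t ⟨l, hl, hlp, hllen⟩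
    refine ⟨l.map fun x => (k : G)⁻¹ * x * (k : G), ?_, ?_, by simpa using hllen⟩
    · intro x hx
      simp only [List.mem_map] at hx
      obtain ⟨y, hy, rfl⟩ := hx
      rcases hl y hy with h | h
      · exact Or.inl (hconj _ _ h)
      · refine Or.inr ?_
        rw [Set.mem_inv] at h ⊢
        have := hconj (k : G) y⁻¹ h
        simpa [mul_assoc] using this
    · rw [conj_word, hlp]
      push_cast
      ring_nf
  obtain ⟨m, hm⟩ := hH T hTgen hTconj
  -- elements of T ∪ T⁻¹ are short words
  have TtoP : ∀ t : H, t ∈ T ∪ T⁻¹ → ∃ l : List G,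
      (∀ x ∈ l, x ∈ S ∪ S⁻¹) ∧ l.prod = (t : G) ∧ l.length ≤ 2 * n + 1 := by
    intro t ht
    rcases ht with ht | ht
    · exact ht
    · rw [Set.mem_inv] at ht
      obtain ⟨l, hl, hlp, hllen⟩ := ht
      obtain ⟨w, hw, hwp, hwl⟩ := inv_word l hl
      exact ⟨w, hw, by rw [hwp, hlp]; push_cast; simp, by omega⟩
  -- flatten
  have flatten : ∀ LH : List H, (∀ t ∈ LH, t ∈ T ∪ T⁻¹) →
      ∃ l : List G, (∀ x ∈ l, x ∈ S ∪ S⁻¹) ∧ l.prod = ((LH.prod : H) : G) ∧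
        l.length ≤ LH.length * (2 * n + 1) := by
    intro LH
    induction LH with
    | nil => exact fun _ => ⟨[], by simp, by simp, by simp⟩
    | cons t LH ih =>
      intro hLH
      obtain ⟨l, hl, hlp, hllen⟩ := ih (fun x hx => hLH x (List.mem_cons_of_mem t hx))
      obtain ⟨w, hw, hwp, hwlen⟩ := TtoP t (hLH t (List.mem_cons_self))
      refine ⟨w ++ l, ?_, ?_, ?_⟩
      · intro x hx
        rcases List.mem_append.1 hx with hx | hx
        exacts [hw x hx, hl x hx]
      · rw [List.prod_append, hwp, hlp]
        simp only [List.prod_cons, MulMemClass.coe_mul]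
      · simp only [List.length_append, List.length_cons]
        calc w.length + l.length ≤ (2 * n + 1) + LH.length * (2 * n + 1) := by omega
        _ = (LH.length + 1) * (2 * n + 1) := by ring
  -- conclusion
  refine ⟨n + m * (2 * n + 1), fun g => ?_⟩
  obtain ⟨v, hv, hvlen, hvmem⟩ := key g
  obtain ⟨LH, hLH, hLHp, hLHlen⟩ := hm ⟨v.prod⁻¹ * g, hvmem⟩
  obtain ⟨l, hl, hlp, hllen⟩ := flatten LH hLH
  refine ⟨v ++ l, ?_, ?_, ?_⟩
  · intro x hx
    rcases List.mem_append.1 hx with hx | hx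
    exacts [hv x hx, hl x hx]
  · rw [List.prod_append, hlp, hLHp]
    simp
  · simp only [List.length_append]
    have : l.length ≤ m * (2 * n + 1) :=
      hllen.trans (Nat.mul_le_mul_right _ hLHlen)
    omega
end
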